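/- In H⁺, for all integers 1 ≤ a < b the following identities hold, where P denotes the palindromic product T_{b−1}T_{b−2}⋯T_{a+1}T_aT_{a+1}⋯T_{b−2}T_{b−1} and P' denotes T_{b−1}'T_{b−2}'⋯T_{a+1}'T_a'T_{a+1}'⋯T_{b−2}'T_{b−1}': X_bY_a = Y_aX_b + h·P'·Y_bX_b; X_bY_a = Y_aX_b + h·Y_aX_a·P'; Y_bX_a = X_aY_b − h·P·X_bY_b; Y_bX_a = X_aY_b − h·X_aY_a·P. -/

import Mathlib

/-!
STATEMENT 0: The standard words form a basis of the stable limit DAHA `H⁺` over `K = ℚ(h)`.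
Generator index `i : ℕ` represents the paper's index `i + 1 ≥ 1`.
-/

noncomputable section

abbrev Kfield : Type := RatFunc ℚ

/-- The variable `h` of `K = ℚ(h)`. -/
def hvar : Kfield := RatFunc.X

/-- Generators of the stable limit DAHA; index `i : ℕ` stands for the paper index `i + 1`. -/
inductive HGen : Type
  | T : ℕ → HGen
  | T' : ℕ → HGen
  | X : ℕ → HGen
  | Y : ℕ → HGen

open FreeAlgebra in
/-- The defining relations of the stable limit DAHA `H⁺`. -/
inductive HRel : FreeAlgebra Kfield HGen → FreeAlgebra Kfield HGen → Prop
  | TT' (i : ℕ) : HRel (ι Kfield (HGen.T i) * ι Kfield (HGen.T' i)) 1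
  | T'T (i : ℕ) : HRel (ι Kfield (HGen.T' i) * ι Kfield (HGen.T i)) 1
  | TminusT' (i : ℕ) :
      HRel (ι Kfield (HGen.T i) - ι Kfield (HGen.T' i))
        (algebraMap Kfield (FreeAlgebra Kfield HGen) hvar)
  | Tcomm (i j : ℕ) (hij : i + 1 < j ∨ j + 1 < i) :
      HRel (ι Kfield (HGen.T i) * ι Kfield (HGen.T j))
        (ι Kfield (HGen.T j) * ι Kfield (HGen.T i))
  | braid (i : ℕ) :
      HRel (ι Kfield (HGen.T i) * ι Kfield (HGen.T (i + 1)) * ι Kfield (HGen.T i))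
        (ι Kfield (HGen.T (i + 1)) * ι Kfield (HGen.T i) * ι Kfield (HGen.T (i + 1)))
  | TXT (i : ℕ) :
      HRel (ι Kfield (HGen.T' i) * ι Kfield (HGen.X i) * ι Kfield (HGen.T' i))
        (ι Kfield (HGen.X (i + 1)))
  | TX (i j : ℕ) (h1 : j ≠ i) (h2 : j ≠ i + 1) :
      HRel (ι Kfield (HGen.T i) * ι Kfield (HGen.X j))
        (ι Kfield (HGen.X j) * ι Kfield (HGen.T i))
  | XX (i j : ℕ) :
      HRel (ι Kfield (HGen.X i) * ι Kfield (HGen.X j))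
        (ι Kfield (HGen.X j) * ι Kfield (HGen.X i))
  | TYT (i : ℕ) :
      HRel (ι Kfield (HGen.T i) * ι Kfield (HGen.Y i) * ι Kfield (HGen.T i))
        (ι Kfield (HGen.Y (i + 1)))
  | TY (i j : ℕ) (h1 : j ≠ i) (h2 : j ≠ i + 1) :
      HRel (ι Kfield (HGen.T i) * ι Kfield (HGen.Y j))
        (ι Kfield (HGen.Y j) * ι Kfield (HGen.T i))
  | YY (i j : ℕ) :
      HRel (ι Kfield (HGen.Y i) * ι Kfield (HGen.Y j))
        (ι Kfield (HGen.Y j) * ι Kfield (HGen.Y i))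
  | cross :
      HRel (ι Kfield (HGen.Y 0) * ι Kfield (HGen.T 0) * ι Kfield (HGen.X 0))
        (ι Kfield (HGen.X 1) * ι Kfield (HGen.Y 0) * ι Kfield (HGen.T 0))

/-- The stable limit DAHA `H⁺`. -/
abbrev Hplus : Type := RingQuot HRel

/-- The image in `H⁺` of a generator. -/
def gen (g : HGen) : Hplus := RingQuot.mkAlgHom Kfield HRel (FreeAlgebra.ι Kfield g)

/-- A letter of the two-letter alphabet `{X_i, Y_i}`: `true ↦ X_i`, `false ↦ Y_i`. -/
def letterElem (i : ℕ) (b : Bool) : Hplus := if b then gen (HGen.X i) else gen (HGen.Y i)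

/-- The element of `H⁺` corresponding to a word `u` in the alphabet `{X_i, Y_i}`. -/
def wordElem (i : ℕ) (u : List Bool) : Hplus := (u.map (letterElem i)).prod

/-- Permutations of `{1, 2, …}` (here realized as `ℕ`) moving only finitely many points. -/
def FinPerm : Type := {w : Equiv.Perm ℕ // {i | w i ≠ i}.Finite}

/-- The adjacent transposition `s_i = (i, i+1)`. -/
def swapAdj (i : ℕ) : Equiv.Perm ℕ := Equiv.swap i (i + 1)

/-- The permutation `s_{i₁} ⋯ s_{i_ℓ}` represented by a list of indices. -/
def wordPerm (l : List ℕ) : Equiv.Perm ℕ := (l.map swapAdj).prod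

/-- The element `T_{i₁} ⋯ T_{i_ℓ}` of `H⁺` attached to a list of indices. -/
def Tword (l : List ℕ) : Hplus := (l.map (fun i => gen (HGen.T i))).prod

instance : Zero (List Bool) := ⟨[]⟩

/-- The ordered product `u₁ u₂ ⋯ u_k` in `H⁺`. -/
def uProd (u : ℕ →₀ List Bool) (k : ℕ) : Hplus :=
  ((List.range k).map (fun i => wordElem i (u i))).prod


/-- The list `[hi, hi-1, …, lo, lo+1, …, hi]` of indices of a palindromic product
`T_hi ⋯ T_lo ⋯ T_hi` (Lean 0-based indices). -/
def palList (lo hi : ℕ) : List ℕ :=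
  (List.range' lo (hi + 1 - lo)).reverse ++ List.range' (lo + 1) (hi - lo)

/-- The palindromic product `T_{b-1} T_{b-2} ⋯ T_{a+1} T_a T_{a+1} ⋯ T_{b-2} T_{b-1}`
(paper indices, `a < b`); in Lean's 0-based encoding this is the palindrome over
indices `a-1, …, b-2`. -/
def palT (lo hi : ℕ) : Hplus := ((palList lo hi).map (fun i => gen (HGen.T i))).prod

/-- `T_{b-1}' T_{b-2}' ⋯ T_{a+1}' T_a' T_{a+1}' ⋯ T_{b-2}' T_{b-1}'`. -/
def palT' (lo hi : ℕ) : Hplus := ((palList lo hi).map (fun i => gen (HGen.T' i))).prod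

namespace Statement4Aux

abbrev tg (i : ℕ) : Hplus := gen (HGen.T i)
abbrev tg' (i : ℕ) : Hplus := gen (HGen.T' i)
abbrev xg (i : ℕ) : Hplus := gen (HGen.X i)
abbrev yg (i : ℕ) : Hplus := gen (HGen.Y i)
abbrev hh : Hplus := algebraMap Kfield Hplus hvar

lemma genRel {x y : FreeAlgebra Kfield HGen} (h : HRel x y) :
    RingQuot.mkAlgHom Kfield HRel x = RingQuot.mkAlgHom Kfield HRel y :=
  RingQuot.mkAlgHom_rel Kfield h

lemma rTT' (i : ℕ) : tg i * tg' i = 1 := by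
  simpa only [gen, map_mul, map_one] using genRel (HRel.TT' i)

lemma rT'T (i : ℕ) : tg' i * tg i = 1 := by
  simpa only [gen, map_mul, map_one] using genRel (HRel.T'T i)

lemma rsub (i : ℕ) : tg i = tg' i + hh := by
  have h := genRel (HRel.TminusT' i)
  rw [map_sub, AlgHom.commutes] at h
  have h' : tg i - tg' i = hh := h
  exact (sub_eq_iff_eq_add.mp h').trans (add_comm _ _)

lemma rsub' (i : ℕ) : tg' i = tg i - hh := by
  rw [rsub i]; exact (add_sub_cancel_right _ _).symm

lemma rTX (i j : ℕ) (h1 : j ≠ i) (h2 : j ≠ i + 1) : tg i * xg j = xg j * tg i := by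
  simpa only [gen, map_mul] using genRel (HRel.TX i j h1 h2)

lemma rTY (i j : ℕ) (h1 : j ≠ i) (h2 : j ≠ i + 1) : tg i * yg j = yg j * tg i := by
  simpa only [gen, map_mul] using genRel (HRel.TY i j h1 h2)

lemma rTXT (i : ℕ) : tg' i * xg i * tg' i = xg (i + 1) := by
  simpa only [gen, map_mul] using genRel (HRel.TXT i)

lemma rTYT (i : ℕ) : tg i * yg i * tg i = yg (i + 1) := by
  simpa only [gen, map_mul] using genRel (HRel.TYT i)

lemma rbraid (i : ℕ) : tg i * tg (i + 1) * tg i = tg (i + 1) * tg i * tg (i + 1) := by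
  simpa only [gen, map_mul] using genRel (HRel.braid i)

lemma rcross : yg 0 * tg 0 * xg 0 = xg 1 * yg 0 * tg 0 := by
  simpa only [gen, map_mul] using genRel HRel.cross

lemma c1 (i : ℕ) (z : Hplus) : tg i * (tg' i * z) = z := by
  rw [← mul_assoc, rTT', one_mul]

lemma c2 (i : ℕ) (z : Hplus) : tg' i * (tg i * z) = z := by
  rw [← mul_assoc, rT'T, one_mul]

lemma hcomm (x : Hplus) : hh * x = x * hh := Algebra.commutes hvar x

lemma hmid (x y : Hplus) : x * (hh * y) = hh * (x * y) := by
  rw [← mul_assoc, ← hcomm, mul_assoc]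

lemma rT'X (i j : ℕ) (h1 : j ≠ i) (h2 : j ≠ i + 1) : tg' i * xg j = xg j * tg' i := by
  have h := rTX i j h1 h2
  calc tg' i * xg j = tg' i * (xg j * (tg i * tg' i)) := by rw [rTT', mul_one]
    _ = xg j * tg' i := by rw [← mul_assoc (xg j), ← h, mul_assoc (tg i), c2]

lemma rT'Y (i j : ℕ) (h1 : j ≠ i) (h2 : j ≠ i + 1) : tg' i * yg j = yg j * tg' i := by
  have h := rTY i j h1 h2
  calc tg' i * yg j = tg' i * (yg j * (tg i * tg' i)) := by rw [rTT', mul_one]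
    _ = yg j * tg' i := by rw [← mul_assoc (yg j), ← h, mul_assoc (tg i), c2]

lemma rTX_z (i j : ℕ) (h1 : j ≠ i) (h2 : j ≠ i + 1) (z : Hplus) :
    tg i * (xg j * z) = xg j * (tg i * z) := by
  rw [← mul_assoc, rTX i j h1 h2, mul_assoc]

lemma rTY_z (i j : ℕ) (h1 : j ≠ i) (h2 : j ≠ i + 1) (z : Hplus) :
    tg i * (yg j * z) = yg j * (tg i * z) := by
  rw [← mul_assoc, rTY i j h1 h2, mul_assoc]

lemma rT'X_z (i j : ℕ) (h1 : j ≠ i) (h2 : j ≠ i + 1) (z : Hplus) :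
    tg' i * (xg j * z) = xg j * (tg' i * z) := by
  rw [← mul_assoc, rT'X i j h1 h2, mul_assoc]

lemma rT'Y_z (i j : ℕ) (h1 : j ≠ i) (h2 : j ≠ i + 1) (z : Hplus) :
    tg' i * (yg j * z) = yg j * (tg' i * z) := by
  rw [← mul_assoc, rT'Y i j h1 h2, mul_assoc]

lemma xsucc_z (i : ℕ) (z : Hplus) : xg (i + 1) * z = tg' i * (xg i * (tg' i * z)) := by
  rw [← rTXT i]; simp only [mul_assoc]

lemma ysucc_z (i : ℕ) (z : Hplus) : yg (i + 1) * z = tg i * (yg i * (tg i * z)) := by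
  rw [← rTYT i]; simp only [mul_assoc]

lemma xsucc_e (i : ℕ) : tg' i * (xg i * tg' i) = xg (i + 1) := by
  rw [← mul_assoc, rTXT]

lemma ysucc_e (i : ℕ) : tg i * (yg i * tg i) = yg (i + 1) := by
  rw [← mul_assoc, rTYT]

lemma m1_z (i : ℕ) (z : Hplus) : tg i * (xg (i + 1) * z) = xg i * (tg' i * z) := by
  rw [xsucc_z, c1]

lemma m1'_z (i : ℕ) (z : Hplus) : xg (i + 1) * (tg i * z) = tg' i * (xg i * z) := by
  rw [xsucc_z i (tg i * z), c2]

lemma m2_z (i : ℕ) (z : Hplus) : tg' i * (yg (i + 1) * z) = yg i * (tg i * z) := by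
  rw [ysucc_z, c2]

lemma braidB_z (i : ℕ) (z : Hplus) :
    tg (i + 1) * (tg i * (tg (i + 1) * (tg' i * z))) = tg i * (tg (i + 1) * z) := by
  rw [← mul_assoc, ← mul_assoc, ← mul_assoc, ← rbraid i, mul_assoc (tg i * tg (i + 1)),
    rTT', mul_one, mul_assoc]

lemma braidA_z (i : ℕ) (z : Hplus) :
    tg i * (tg (i + 1) * (tg' i * z)) = tg' (i + 1) * (tg i * (tg (i + 1) * z)) := by
  conv_lhs => rw [← c2 (i + 1) (tg i * (tg (i + 1) * (tg' i * z)))]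
  rw [braidB_z]

lemma cross_z (i : ℕ) : ∀ z : Hplus,
    yg i * (tg i * (xg i * z)) = xg (i + 1) * (yg i * (tg i * z)) := by
  induction i with
  | zero =>
    intro z
    rw [← mul_assoc, ← mul_assoc, rcross, mul_assoc, mul_assoc]
  | succ i ih =>
    intro z
    rw [ysucc_z i, xsucc_z i, braidA_z i, rTX_z (i + 1) i (by omega) (by omega),
      ← rT'Y_z (i + 1) i (by omega) (by omega), ih, ← m1'_z (i + 1),
      rTX_z i (i + 1 + 1) (by omega) (by omega), rTY_z (i + 1) i (by omega) (by omega),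
      braidB_z i, ← ysucc_z i (tg (i + 1) * z)]

lemma crossE (i : ℕ) : yg i * (tg i * xg i) = xg (i + 1) * (yg i * tg i) := by
  simpa only [mul_one] using cross_z i 1

lemma crossP (i : ℕ) : yg i * (tg i * (xg i * tg' i)) = xg (i + 1) * yg i := by
  rw [cross_z i (tg' i), rTT', mul_one]

lemma key1_e (b : ℕ) : tg' b * (yg (b + 1) * xg (b + 1)) = yg b * (xg b * tg' b) := by
  have h : tg' b * (yg (b + 1) * (xg (b + 1) * 1)) = yg b * (xg b * (tg' b * 1)) := by
    rw [m2_z, m1_z]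
  simpa only [mul_one] using h

lemma key2_e (b : ℕ) : tg b * (xg (b + 1) * yg (b + 1)) = xg b * (yg b * tg b) := by
  have h : tg b * (xg (b + 1) * (yg (b + 1) * 1)) = xg b * (yg b * (tg b * 1)) := by
    rw [m1_z, m2_z]
  simpa only [mul_one] using h

lemma palList_self (a : ℕ) : palList a a = [a] := by
  simp [palList, Nat.add_sub_cancel_left, Nat.sub_self]

lemma palList_succ (a b : ℕ) (h : a ≤ b) :
    palList a (b + 1) = (b + 1) :: (palList a b ++ [b + 1]) := by
  unfold palList
  have h1 : b + 1 + 1 - a = (b + 1 - a) + 1 := by omega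
  have h2 : b + 1 - a = (b - a) + 1 := by omega
  have h3 : a + (b + 1 - a) = b + 1 := by omega
  have h4 : a + 1 + (b - a) = b + 1 := by omega
  rw [h1, List.range'_1_concat, h3, h2, List.range'_1_concat (s := a) (n := b - a),
    List.range'_1_concat (s := a + 1) (n := b - a), h4]
  simp

lemma palT'_self (a : ℕ) : palT' a a = tg' a := by
  simp [palT', palList_self, gen]

lemma palT_self (a : ℕ) : palT a a = tg a := by
  simp [palT, palList_self, gen]

lemma palT'_succ (a b : ℕ) (h : a ≤ b) :
    palT' a (b + 1) = tg' (b + 1) * (palT' a b * tg' (b + 1)) := by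
  rw [palT', palList_succ a b h]
  simp [palT', List.prod_append, mul_assoc]

lemma palT_succ (a b : ℕ) (h : a ≤ b) :
    palT a (b + 1) = tg (b + 1) * (palT a b * tg (b + 1)) := by
  rw [palT, palList_succ a b h]
  simp [palT, List.prod_append, mul_assoc]

lemma main (a d : ℕ) :
    (xg (a + d + 1) * yg a =
        yg a * xg (a + d + 1) +
          hh * (palT' a (a + d) * (yg (a + d + 1) * xg (a + d + 1)))) ∧
    (xg (a + d + 1) * yg a =
        yg a * xg (a + d + 1) + hh * (yg a * xg a * palT' a (a + d))) ∧
    (yg (a + d + 1) * xg a =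
        xg a * yg (a + d + 1) -
          hh * (palT a (a + d) * (xg (a + d + 1) * yg (a + d + 1)))) ∧
    (yg (a + d + 1) * xg a =
        xg a * yg (a + d + 1) - hh * (xg a * yg a * palT a (a + d))) := by
  induction d with
  | zero =>
    simp only [Nat.add_zero, palT'_self, palT_self]
    have H2 : xg (a + 1) * yg a = yg a * xg (a + 1) + hh * (yg a * (xg a * tg' a)) := by
      rw [← crossP a, rsub a, add_mul, mul_add, xsucc_e a, hmid]
    have H4 : yg (a + 1) * xg a = xg a * yg (a + 1) - hh * (xg a * (yg a * tg a)) := by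
      rw [ysucc_z a (xg a), crossE a, m1_z a, rsub' a, sub_mul, mul_sub, ysucc_e a, hmid]
    refine ⟨?_, ?_, ?_, ?_⟩
    · rw [key1_e a]; exact H2
    · simpa only [mul_assoc] using H2
    · rw [key2_e a]; exact H4
    · simpa only [mul_assoc] using H4
  | succ d ih =>
    obtain ⟨ih1, ih2, ih3, ih4⟩ := ih
    have hb : a ≤ a + d := Nat.le_add_right a d
    have hne1 : a ≠ a + d + 1 := by omega
    have hne2 : a ≠ a + d + 1 + 1 := by omega
    have ih1z : ∀ z : Hplus, xg (a + d + 1) * (yg a * z) =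
        yg a * (xg (a + d + 1) * z) +
          hh * (palT' a (a + d) * (yg (a + d + 1) * (xg (a + d + 1) * z))) := fun z => by
      rw [← mul_assoc, ih1, add_mul]; simp only [mul_assoc]
    have ih2z : ∀ z : Hplus, xg (a + d + 1) * (yg a * z) =
        yg a * (xg (a + d + 1) * z) + hh * (yg a * (xg a * (palT' a (a + d) * z))) := fun z => by
      rw [← mul_assoc, ih2, add_mul]; simp only [mul_assoc]
    have ih3z : ∀ z : Hplus, yg (a + d + 1) * (xg a * z) =
        xg a * (yg (a + d + 1) * z) -
          hh * (palT a (a + d) * (xg (a + d + 1) * (yg (a + d + 1) * z))) := fun z => by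
      rw [← mul_assoc, ih3, sub_mul]; simp only [mul_assoc]
    have ih4z : ∀ z : Hplus, yg (a + d + 1) * (xg a * z) =
        xg a * (yg (a + d + 1) * z) - hh * (xg a * (yg a * (palT a (a + d) * z))) := fun z => by
      rw [← mul_assoc, ih4, sub_mul]; simp only [mul_assoc]
    simp only [← Nat.add_assoc]
    rw [palT'_succ a (a + d) hb, palT_succ a (a + d) hb]
    refine ⟨?_, ?_, ?_, ?_⟩
    · simp only [mul_assoc]
      rw [xsucc_z (a + d + 1) (yg a), rT'Y (a + d + 1) a hne1 hne2, ih1z (tg' (a + d + 1)),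
        mul_add, rT'Y_z (a + d + 1) a hne1 hne2, xsucc_e (a + d + 1), hmid,
        ← key1_e (a + d + 1)]
    · simp only [mul_assoc]
      rw [xsucc_z (a + d + 1) (yg a), rT'Y (a + d + 1) a hne1 hne2, ih2z (tg' (a + d + 1)),
        mul_add, rT'Y_z (a + d + 1) a hne1 hne2, xsucc_e (a + d + 1), hmid,
        rT'Y_z (a + d + 1) a hne1 hne2, rT'X_z (a + d + 1) a hne1 hne2]
    · simp only [mul_assoc]
      rw [ysucc_z (a + d + 1) (xg a), rTX (a + d + 1) a hne1 hne2, ih3z (tg (a + d + 1)),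
        mul_sub, rTX_z (a + d + 1) a hne1 hne2, ysucc_e (a + d + 1), hmid,
        ← key2_e (a + d + 1)]
    · simp only [mul_assoc]
      rw [ysucc_z (a + d + 1) (xg a), rTX (a + d + 1) a hne1 hne2, ih4z (tg (a + d + 1)),
        mul_sub, rTX_z (a + d + 1) a hne1 hne2, ysucc_e (a + d + 1), hmid,
        rTX_z (a + d + 1) a hne1 hne2, rTY_z (a + d + 1) a hne1 hne2]

end Statement4Aux

/-- In `H⁺`, for all `1 ≤ a < b` (paper indices; in Lean's 0-based encoding below, `a b : ℕ`
with `a < b` stand for the paper indices `a+1 < b+1`):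
`X_bY_a = Y_aX_b + h·P'·Y_bX_b`, `X_bY_a = Y_aX_b + h·Y_aX_a·P'`,
`Y_bX_a = X_aY_b − h·P·X_bY_b`, `Y_bX_a = X_aY_b − h·X_aY_a·P`,
where `P = T_{b−1}⋯T_{a+1}T_aT_{a+1}⋯T_{b−1}` and `P'` is the same palindrome in the `T_i'`. -/
theorem statement4 (a b : ℕ) (hab : a < b) :
    (gen (HGen.X b) * gen (HGen.Y a) =
        gen (HGen.Y a) * gen (HGen.X b) +
          algebraMap Kfield Hplus hvar * (palT' a (b - 1) * (gen (HGen.Y b) * gen (HGen.X b)))) ∧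
    (gen (HGen.X b) * gen (HGen.Y a) =
        gen (HGen.Y a) * gen (HGen.X b) +
          algebraMap Kfield Hplus hvar * (gen (HGen.Y a) * gen (HGen.X a) * palT' a (b - 1))) ∧
    (gen (HGen.Y b) * gen (HGen.X a) =
        gen (HGen.X a) * gen (HGen.Y b) -
          algebraMap Kfield Hplus hvar * (palT a (b - 1) * (gen (HGen.X b) * gen (HGen.Y b)))) ∧
    (gen (HGen.Y b) * gen (HGen.X a) =
        gen (HGen.X a) * gen (HGen.Y b) -
          algebraMap Kfield Hplus hvar * (gen (HGen.X a) * gen (HGen.Y a) * palT a (b - 1))) := by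
  obtain ⟨d, rfl⟩ : ∃ d, b = a + d + 1 := ⟨b - a - 1, by omega⟩
  simp only [Nat.add_sub_cancel]
  exact Statement4Aux.main a d

end
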